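/- arXiv:1610.04274 — 2 statements merged into one kernel-verified Lean document; each statement's English description precedes it below -/
import Mathlib

section
/- Cluster-and-combine is bounded above by combine-and-cluster: for every finite set X with distance-interval data (d̲, d̄) and α ∈ [0,1], and all x, x' ∈ X, u^CL(x,x') ≤ u^CO(x,x'). -/
/-- The cost of a chain (list of nodes): maximum dissimilarity over consecutive links. -/
def chainCost {X : Type*} (d : X → X → ℝ) : List X → ℝ
  | [] => 0
  | [_] => 0
  | a :: b :: l => max (d a b) (chainCost d (b :: l))

/-- The minimum chain cost between `x` and `x'`: infimum of costs of chains from `x` to `x'`. -/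
noncomputable def minChainCost {X : Type*} (d : X → X → ℝ) (x x' : X) : ℝ :=
  sInf { c | ∃ l : List X, l.head? = some x ∧ l.getLast? = some x' ∧ chainCost d l = c }

/-- Combine-and-cluster ultrametric. -/
noncomputable def uCO {X : Type*} (dlb dub : X → X → ℝ) (α : ℝ) : X → X → ℝ :=
  minChainCost (fun a b => α * dub a b + (1 - α) * dlb a b)

/-- Cluster-and-combine ultrametric. -/
noncomputable def uCL {X : Type*} (dlb dub : X → X → ℝ) (α : ℝ) : X → X → ℝ :=
  minChainCost (fun a b => α * minChainCost dub a b + (1 - α) * minChainCost dlb a b)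

lemma chainCost_nonneg {X : Type*} (d : X → X → ℝ) (hd : ∀ a b, 0 ≤ d a b) :
    ∀ l : List X, 0 ≤ chainCost d l
  | [] => le_refl 0
  | [_] => le_refl 0
  | a :: b :: l => le_trans (chainCost_nonneg d hd (b :: l)) (le_max_right _ _)

lemma chainCost_mono {X : Type*} (d d' : X → X → ℝ) (h : ∀ a b, d' a b ≤ d a b) :
    ∀ l : List X, chainCost d' l ≤ chainCost d l
  | [] => le_refl 0
  | [_] => le_refl 0
  | a :: b :: l => max_le_max (h a b) (chainCost_mono d d' h (b :: l))

lemma chainSet_nonempty {X : Type*} (d : X → X → ℝ) (x x' : X) :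
    {c | ∃ l : List X, l.head? = some x ∧ l.getLast? = some x' ∧ chainCost d l = c}.Nonempty :=
  ⟨chainCost d [x, x'], [x, x'], rfl, rfl, rfl⟩

lemma chainSet_bddBelow {X : Type*} (d : X → X → ℝ) (hd : ∀ a b, 0 ≤ d a b) (x x' : X) :
    BddBelow {c | ∃ l : List X, l.head? = some x ∧ l.getLast? = some x' ∧ chainCost d l = c} := by
  refine ⟨0, fun c hc => ?_⟩
  obtain ⟨l, _, _, rfl⟩ := hc
  exact chainCost_nonneg d hd l

lemma minChainCost_le {X : Type*} (d : X → X → ℝ) (hd : ∀ a b, 0 ≤ d a b) (x x' : X) :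
    minChainCost d x x' ≤ d x x' := by
  have h := csInf_le (chainSet_bddBelow d hd x x') ⟨[x, x'], rfl, rfl, rfl⟩
  simpa [minChainCost, chainCost, max_eq_left (hd x x')] using h

lemma minChainCost_nonneg {X : Type*} (d : X → X → ℝ) (hd : ∀ a b, 0 ≤ d a b) (x x' : X) :
    0 ≤ minChainCost d x x' :=
  le_csInf (chainSet_nonempty d x x') (fun c hc => by
    obtain ⟨l, _, _, rfl⟩ := hc; exact chainCost_nonneg d hd l)

theorem uCL_le_uCO {X : Type*} [Fintype X] [Nonempty X]
    (dlb dub : X → X → ℝ)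
    (hsl : ∀ x y, dlb x y = dlb y x) (hsu : ∀ x y, dub x y = dub y x)
    (hbd : ∀ x y, x ≠ y → 0 < dlb x y ∧ dlb x y ≤ dub x y)
    (hdl : ∀ x, dlb x x = 0) (hdu : ∀ x, dub x x = 0)
    (α : ℝ) (hα0 : 0 ≤ α) (hα1 : α ≤ 1) :
    ∀ x x', uCL dlb dub α x x' ≤ uCO dlb dub α x x' := by
  have hl : ∀ a b, 0 ≤ dlb a b := by
    intro a b
    by_cases h : a = b
    · simp [h, hdl]
    · exact (hbd a b h).1.le
  have hu : ∀ a b, 0 ≤ dub a b := by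
    intro a b
    by_cases h : a = b
    · simp [h, hdu]
    · exact le_trans (hbd a b h).1.le (hbd a b h).2
  set dCO : X → X → ℝ := fun a b => α * dub a b + (1 - α) * dlb a b with hdCO
  set dCL : X → X → ℝ := fun a b =>
    α * minChainCost dub a b + (1 - α) * minChainCost dlb a b with hdCL
  have hle : ∀ a b, dCL a b ≤ dCO a b := by
    intro a b
    exact add_le_add
      (mul_le_mul_of_nonneg_left (minChainCost_le dub hu a b) hα0)
      (mul_le_mul_of_nonneg_left (minChainCost_le dlb hl a b) (by linarith))
  have hCLnn : ∀ a b, 0 ≤ dCL a b := fun a b =>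
    add_nonneg (mul_nonneg hα0 (minChainCost_nonneg dub hu a b))
      (mul_nonneg (by linarith) (minChainCost_nonneg dlb hl a b))
  intro x x'
  unfold uCL uCO minChainCost
  refine le_csInf (chainSet_nonempty _ x x') (fun c hc => ?_)
  obtain ⟨l, h1, h2, rfl⟩ := hc
  exact le_trans (csInf_le (chainSet_bddBelow dCL hCLnn x x') ⟨l, h1, h2, rfl⟩)
    (chainCost_mono dCO dCL hle l)
end

section
/- Four-point lemma (Fact 2): Let c̄ and c̲ be two ultrametrics on a set containing points x, x̃, x', x̃', write ā = c̄(x,x̃), b̄ = c̄(x',x̃'), ē = c̄(x,x'), f̄ = c̄(x̃,x̃'), ḡ = c̄(x,x̃'), h̄ = c̄(x̃,x') and analogously a̲,b̲,e̲,f̲,g̲,h̲ for c̲. If α ā + (1-α) a̲ ≤ δ, α b̄ + (1-α) b̲ ≤ δ, and α ē + (1-α) f̲ ≤ δ, then at least one of α ē + (1-α) e̲ ≤ δ, α f̄ + (1-α) f̲ ≤ δ, α ḡ + (1-α) g̲ ≤ δ, α h̄ + (1-α) h̲ ≤ δ holds. -/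
theorem four_point_lemma {X : Type*}
    (cbar clb : X → X → ℝ)
    (hsu : ∀ x y, cbar x y = cbar y x) (hsl : ∀ x y, clb x y = clb y x)
    (htu : ∀ a b c, cbar a c ≤ max (cbar a b) (cbar b c))
    (htl : ∀ a b c, clb a c ≤ max (clb a b) (clb b c))
    (x xt x' xt' : X)
    (α : ℝ) (hα0 : 0 ≤ α) (hα1 : α ≤ 1)
    (δ : ℝ) (hδ : 0 ≤ δ)
    (ha : α * cbar x xt + (1 - α) * clb x xt ≤ δ)
    (hb : α * cbar x' xt' + (1 - α) * clb x' xt' ≤ δ)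
    (hef : α * cbar x x' + (1 - α) * clb xt xt' ≤ δ) :
    α * cbar x x' + (1 - α) * clb x x' ≤ δ ∨
    α * cbar xt xt' + (1 - α) * clb xt xt' ≤ δ ∨
    α * cbar x xt' + (1 - α) * clb x xt' ≤ δ ∨
    α * cbar xt x' + (1 - α) * clb xt x' ≤ δ := by
  have key : ∀ p q p' q' : ℝ, p ≤ p' → q ≤ q' →
      α * p' + (1 - α) * q' ≤ δ → α * p + (1 - α) * q ≤ δ := by
    intro p q p' q' h1 h2 h3
    nlinarith [mul_le_mul_of_nonneg_left h1 hα0,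
      mul_le_mul_of_nonneg_left h2 (by linarith : (0:ℝ) ≤ 1 - α)]
  -- bar-side chain: f̄ ≤ max(ā, max(ē, b̄))
  have hfbar : cbar xt xt' ≤ max (cbar x xt) (max (cbar x x') (cbar x' xt')) := by
    calc cbar xt xt' ≤ max (cbar xt x) (cbar x xt') := htu _ _ _
      _ ≤ max (cbar x xt) (max (cbar x x') (cbar x' xt')) := by
          rw [hsu xt x]; exact max_le_max le_rfl (htu _ _ _)
  -- lower-side chain: e̲ ≤ max(a̲, max(f̲, b̲))
  have helb : clb x x' ≤ max (clb x xt) (max (clb xt xt') (clb x' xt')) := by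
    calc clb x x' ≤ max (clb x xt) (clb xt x') := htl _ _ _
      _ ≤ max (clb x xt) (max (clb xt xt') (clb x' xt')) := by
          refine max_le_max le_rfl ?_
          calc clb xt x' ≤ max (clb xt xt') (clb xt' x') := htl _ _ _
            _ = max (clb xt xt') (clb x' xt') := by rw [hsl xt' x']
  have hglb : clb x xt' ≤ max (clb x xt) (clb xt xt') := htl _ _ _
  have hgbar : cbar x xt' ≤ max (cbar x x') (cbar x' xt') := htu _ _ _
  have hhlb : clb xt x' ≤ max (clb xt xt') (clb x' xt') := by
    calc clb xt x' ≤ max (clb xt xt') (clb xt' x') := htl _ _ _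
      _ = max (clb xt xt') (clb x' xt') := by rw [hsl xt' x']
  have hhbar : cbar xt x' ≤ max (cbar x xt) (cbar x x') := by
    calc cbar xt x' ≤ max (cbar xt x) (cbar x x') := htu _ _ _
      _ = max (cbar x xt) (cbar x x') := by rw [hsu xt x]
  rcases le_total (clb x xt) (clb xt xt') with hA | hA <;>
    rcases le_total (clb x' xt') (clb xt xt') with hB | hB
  · -- a̲ ≤ f̲, b̲ ≤ f̲ : disjunct 1
    left
    exact key _ _ _ _ le_rfl
      (helb.trans (max_le hA (max_le le_rfl hB))) hef
  · -- a̲ ≤ f̲, f̲ ≤ b̲ : disjunct 3 via g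
    right; right; left
    rcases le_max_iff.mp hgbar with hg | hg
    · exact key _ _ _ _ hg (hglb.trans (max_le hA le_rfl)) hef
    · exact key _ _ _ _ hg ((hglb.trans (max_le hA le_rfl)).trans hB) hb
  · -- f̲ ≤ a̲, b̲ ≤ f̲ : disjunct 4 via h
    right; right; right
    rcases le_max_iff.mp hhbar with hh | hh
    · exact key _ _ _ _ hh ((hhlb.trans (max_le le_rfl hB)).trans hA) ha
    · exact key _ _ _ _ hh (hhlb.trans (max_le le_rfl hB)) hef
  · -- f̲ ≤ a̲, f̲ ≤ b̲ : disjunct 2 via f̄ chain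
    right; left
    rcases le_max_iff.mp hfbar with hf | hf
    · exact key _ _ _ _ hf hA ha
    rcases le_max_iff.mp hf with hf' | hf'
    · exact key _ _ _ _ hf' le_rfl hef
    · exact key _ _ _ _ hf' hB hb
end
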